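/- arXiv:2207.13437 — 3 statements merged into one kernel-verified Lean document; each statement's English description precedes it below -/
import Mathlib

section
/- Let f, g : ℝ → ℝ be continuous functions satisfying |f(x)| ≤ C₁/(1+|x|²) and |g(x)| ≤ C₁/(1+|x|²) for all x and some constant C₁ > 0. Then there exists C > 0 such that for every sufficiently small ε > 0, ∫ℝ |f(x) g(x + 1/ε)| dx ≤ C ε². -/
open MeasureTheory Real

/-- Decoupling estimate (Lemma A.7, first part): for continuous `f, g` with
quadratic decay, `∫ |f(x) g(x + 1/ε)| dx ≤ C ε²` for all sufficiently small `ε > 0`. -/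
theorem decoupling_estimate_shift
    (f g : ℝ → ℝ) (hf : Continuous f) (hg : Continuous g)
    (C₁ : ℝ) (hC₁ : 0 < C₁)
    (hfb : ∀ x, |f x| ≤ C₁ / (1 + x ^ 2))
    (hgb : ∀ x, |g x| ≤ C₁ / (1 + x ^ 2)) :
    ∃ C > 0, ∃ ε₀ > 0, ∀ ε : ℝ, 0 < ε → ε < ε₀ →
      ∫ x : ℝ, |f x * g (x + 1 / ε)| ≤ C * ε ^ 2 := by
  have hpi : (0:ℝ) < π := Real.pi_pos
  refine ⟨8 * π * C₁ ^ 2, by positivity, 1, one_pos, fun ε hε hε1 => ?_⟩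
  set R : ℝ := 1 / ε with hRdef
  have hR : 0 < R := by positivity
  have hRε : R * ε = 1 := by rw [hRdef, one_div, inv_mul_cancel₀ hε.ne']
  have hint1 : Integrable (fun x : ℝ => (1 + x ^ 2)⁻¹) := integrable_inv_one_add_sq
  have hint2 : Integrable (fun x : ℝ => (1 + (x + R) ^ 2)⁻¹) := by
    have := hint1.comp_add_right R
    simpa using this
  have hposa : ∀ x : ℝ, (0:ℝ) < 1 + x ^ 2 := fun x => by positivity
  -- integrability of the LHS
  have hcont : Continuous (fun x : ℝ => |f x * g (x + R)|) :=
    (hf.mul (hg.comp (continuous_id.add continuous_const))).abs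
  have hintL : Integrable (fun x : ℝ => |f x * g (x + R)|) := by
    refine (hint1.const_mul (C₁ * C₁)).mono' hcont.aestronglyMeasurable ?_
    filter_upwards with x
    have h1 := hfb x
    have h2 : |g (x + R)| ≤ C₁ := by
      refine (hgb (x + R)).trans ?_
      rw [div_le_iff₀ (hposa (x + R))]
      nlinarith [sq_nonneg (x + R)]
    have h0 : |f x| ≥ 0 := abs_nonneg _
    rw [Real.norm_eq_abs, abs_abs, abs_mul]
    calc |f x| * |g (x + R)| ≤ (C₁ / (1 + x ^ 2)) * C₁ :=
          mul_le_mul h1 h2 (abs_nonneg _) (by positivity)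
      _ = C₁ * C₁ * (1 + x ^ 2)⁻¹ := by ring
  -- pointwise bound
  have hpt : ∀ x : ℝ, |f x * g (x + R)| ≤
      4 * C₁ ^ 2 * ε ^ 2 * ((1 + x ^ 2)⁻¹ + (1 + (x + R) ^ 2)⁻¹) := by
    intro x
    have ha := hposa x
    have hb := hposa (x + R)
    have h1 : |f x * g (x + R)| ≤ (C₁ / (1 + x ^ 2)) * (C₁ / (1 + (x + R) ^ 2)) := by
      rw [abs_mul]
      exact mul_le_mul (hfb x) (hgb (x + R)) (abs_nonneg _) (by positivity)
    refine h1.trans ?_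
    rw [div_mul_div_comm]
    rw [div_le_iff₀ (by positivity)]
    have key : R ^ 2 ≤ 4 * ((1 + x ^ 2) + (1 + (x + R) ^ 2)) := by
      nlinarith [sq_nonneg (2 * x + R)]
    have hε2 : ε ^ 2 * R ^ 2 = 1 := by nlinarith [hRε]
    have expand : 4 * C₁ ^ 2 * ε ^ 2 * ((1 + x ^ 2)⁻¹ + (1 + (x + R) ^ 2)⁻¹) *
        ((1 + x ^ 2) * (1 + (x + R) ^ 2)) =
        4 * C₁ ^ 2 * ε ^ 2 * ((1 + (x + R) ^ 2) + (1 + x ^ 2)) := by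
      field_simp
      try ring
    rw [expand]
    have : C₁ * C₁ = C₁ ^ 2 * (ε ^ 2 * R ^ 2) := by rw [hε2]; ring
    rw [this]
    have hC2 : (0:ℝ) ≤ C₁ ^ 2 * ε ^ 2 := by positivity
    calc C₁ ^ 2 * (ε ^ 2 * R ^ 2) = C₁ ^ 2 * ε ^ 2 * R ^ 2 := by ring
      _ ≤ C₁ ^ 2 * ε ^ 2 * (4 * ((1 + x ^ 2) + (1 + (x + R) ^ 2))) :=
          mul_le_mul_of_nonneg_left key hC2
      _ = 4 * C₁ ^ 2 * ε ^ 2 * ((1 + (x + R) ^ 2) + (1 + x ^ 2)) := by ring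
  have hintD : Integrable (fun x : ℝ => 4 * C₁ ^ 2 * ε ^ 2 *
      ((1 + x ^ 2)⁻¹ + (1 + (x + R) ^ 2)⁻¹)) := ((hint1.add hint2).const_mul _)
  calc ∫ x : ℝ, |f x * g (x + R)|
      ≤ ∫ x : ℝ, 4 * C₁ ^ 2 * ε ^ 2 * ((1 + x ^ 2)⁻¹ + (1 + (x + R) ^ 2)⁻¹) :=
        integral_mono hintL hintD hpt
    _ = 4 * C₁ ^ 2 * ε ^ 2 * (π + π) := by
        rw [integral_const_mul, integral_add hint1 hint2, integral_univ_inv_one_add_sq]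
        congr 2
        have : ∫ x : ℝ, (1 + (x + R) ^ 2)⁻¹ = ∫ x : ℝ, (1 + x ^ 2)⁻¹ := by
          exact integral_add_right_eq_self (fun x : ℝ => (1 + x ^ 2)⁻¹) R
        rw [this, integral_univ_inv_one_add_sq]
    _ = 8 * π * C₁ ^ 2 * ε ^ 2 := by ring
end

section
/- Let s > 1/2. There exists C > 0 (depending on s) such that for every f ∈ H^s(ℝ), ‖f‖_{L^∞} ≤ C ‖f‖_{H^{1/2}} (ln(2 + ‖f‖_{H^s}/‖f‖_{H^{1/2}}))^{1/2}. -/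
open MeasureTheory
open Set

set_option maxHeartbeats 1000000

private lemma sqrt_mul_le_add_div_two {a b : ℝ} (ha : 0 ≤ a) (hb : 0 ≤ b) :
    Real.sqrt (a * b) ≤ (a + b) / 2 := by
  have h : a * b ≤ ((a + b) / 2) ^ 2 := by nlinarith [sq_nonneg (a - b)]
  calc Real.sqrt (a * b) ≤ Real.sqrt (((a + b) / 2) ^ 2) := Real.sqrt_le_sqrt h
    _ = (a + b) / 2 := Real.sqrt_sq (by positivity)

private lemma amgm_integral {μ : Measure ℝ} {w : ℝ → ℝ} {g : ℝ → ℂ}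
    (hw : ∀ ξ, 0 < w ξ) (hg : AEStronglyMeasurable g μ)
    (h1 : Integrable (fun ξ => (w ξ)⁻¹) μ)
    (h2 : Integrable (fun ξ => w ξ * ‖g ξ‖ ^ 2) μ)
    {I J : ℝ} (hIpos : 0 < I) (hJpos : 0 < J)
    (hI : ∫ ξ, (w ξ)⁻¹ ∂μ ≤ I) (hJ : ∫ ξ, w ξ * ‖g ξ‖ ^ 2 ∂μ ≤ J) :
    Integrable (fun ξ => ‖g ξ‖) μ ∧ ∫ ξ, ‖g ξ‖ ∂μ ≤ Real.sqrt I * Real.sqrt J := by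
  set l := Real.sqrt (J / I) with hl
  have hlpos : 0 < l := Real.sqrt_pos.mpr (by positivity)
  have hpt : ∀ ξ, ‖g ξ‖ ≤ (l * (w ξ)⁻¹ + l⁻¹ * (w ξ * ‖g ξ‖ ^ 2)) / 2 := by
    intro ξ
    have hwξ := hw ξ
    calc ‖g ξ‖ = Real.sqrt ((l * (w ξ)⁻¹) * (l⁻¹ * (w ξ * ‖g ξ‖ ^ 2))) := by
          rw [show (l * (w ξ)⁻¹) * (l⁻¹ * (w ξ * ‖g ξ‖ ^ 2)) = ‖g ξ‖ ^ 2 by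
            field_simp]
          exact (Real.sqrt_sq (norm_nonneg _)).symm
      _ ≤ _ := sqrt_mul_le_add_div_two (by positivity) (by positivity)
  have hmaj : Integrable (fun ξ => (l * (w ξ)⁻¹ + l⁻¹ * (w ξ * ‖g ξ‖ ^ 2)) / 2) μ :=
    ((h1.const_mul l).add (h2.const_mul l⁻¹)).div_const 2
  have hint : Integrable (fun ξ => ‖g ξ‖) μ :=
    hmaj.mono' hg.norm (Filter.Eventually.of_forall fun ξ => by
      rw [Real.norm_eq_abs, abs_of_nonneg (norm_nonneg _)]; exact hpt ξ)
  refine ⟨hint, ?_⟩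
  have hsI := Real.sq_sqrt hIpos.le
  have hsJ := Real.sq_sqrt hJpos.le
  have hsIpos : 0 < Real.sqrt I := Real.sqrt_pos.mpr hIpos
  have hsJpos : 0 < Real.sqrt J := Real.sqrt_pos.mpr hJpos
  have hldiv : l = Real.sqrt J / Real.sqrt I := by
    rw [hl, Real.sqrt_div hJpos.le]
  calc ∫ ξ, ‖g ξ‖ ∂μ
      ≤ ∫ ξ, (l * (w ξ)⁻¹ + l⁻¹ * (w ξ * ‖g ξ‖ ^ 2)) / 2 ∂μ :=
        integral_mono hint hmaj hpt
    _ = (l * (∫ ξ, (w ξ)⁻¹ ∂μ) + l⁻¹ * (∫ ξ, w ξ * ‖g ξ‖ ^ 2 ∂μ)) / 2 := by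
        rw [integral_div, integral_add (h1.const_mul l) (h2.const_mul l⁻¹),
          MeasureTheory.integral_const_mul, MeasureTheory.integral_const_mul]
    _ ≤ (l * I + l⁻¹ * J) / 2 := by
        have b1 := mul_le_mul_of_nonneg_left hI hlpos.le
        have b2 := mul_le_mul_of_nonneg_left hJ (inv_nonneg.mpr hlpos.le)
        linarith
    _ = Real.sqrt I * Real.sqrt J := by
        rw [hldiv]
        field_simp
        nlinarith [hsI, hsJ]

private lemma weight_low {R : ℝ} (hR : 1 ≤ R) :
    ∫ ξ in Icc (-R) R, ((1 + ξ ^ 2) ^ ((1 : ℝ) / 2))⁻¹ ≤ 4 * Real.log (2 + R) := by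
  have hRR : -R ≤ R := by linarith
  have heq : ∀ ξ : ℝ, ((1 + ξ ^ 2) ^ ((1 : ℝ) / 2))⁻¹ = (Real.sqrt (1 + ξ ^ 2))⁻¹ := by
    intro ξ; rw [Real.sqrt_eq_rpow]
  have hcont : Continuous fun x : ℝ => (Real.sqrt (1 + x ^ 2))⁻¹ := by
    apply Continuous.inv₀
    · fun_prop
    · intro x
      have : (0:ℝ) < 1 + x ^ 2 := by positivity
      positivity
  have hFTC : ∫ x in (-R)..R, (Real.sqrt (1 + x ^ 2))⁻¹
      = Real.arsinh R - Real.arsinh (-R) :=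
    intervalIntegral.integral_eq_sub_of_hasDerivAt
      (fun x _ => Real.hasDerivAt_arsinh x) (hcont.intervalIntegrable _ _)
  have h1 : ∫ ξ in Icc (-R) R, ((1 + ξ ^ 2) ^ ((1 : ℝ) / 2))⁻¹
      = 2 * Real.arsinh R := by
    simp_rw [heq]
    rw [MeasureTheory.integral_Icc_eq_integral_Ioc,
      ← intervalIntegral.integral_of_le hRR, hFTC, Real.arsinh_neg]
    ring
  rw [h1]
  have h2 : Real.arsinh R ≤ 2 * Real.log (2 + R) := by
    rw [Real.arsinh]
    have hlp : Real.log ((2 + R) ^ (2:ℕ)) = 2 * Real.log (2 + R) := by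
      rw [Real.log_pow]; norm_num
    rw [← hlp]
    apply Real.log_le_log (by positivity)
    have hsq : Real.sqrt (1 + R ^ 2) ≤ 1 + R :=
      calc Real.sqrt (1 + R ^ 2) ≤ Real.sqrt ((1 + R) ^ 2) :=
            Real.sqrt_le_sqrt (by nlinarith)
        _ = 1 + R := Real.sqrt_sq (by linarith)
    nlinarith
  linarith

private lemma integrable_jbracket {s : ℝ} (hs : 1 / 2 < s) :
    Integrable (fun ξ : ℝ => ((1 + ξ ^ 2) ^ s)⁻¹) := by
  have h := integrable_rpow_neg_one_add_norm_sq (E := ℝ) (μ := volume) (r := 2 * s)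
    (by simp; linarith)
  refine h.congr (Filter.Eventually.of_forall fun ξ => ?_)
  have h1 : (0:ℝ) ≤ 1 + ξ ^ 2 := by positivity
  show (1 + ‖ξ‖ ^ 2) ^ (-(2 * s) / 2) = ((1 + ξ ^ 2) ^ s)⁻¹
  rw [Real.norm_eq_abs, sq_abs, show -(2 * s) / 2 = -s by ring, Real.rpow_neg h1]

private lemma weight_high {s R : ℝ} (hs : 1 / 2 < s) (hR : 1 ≤ R) :
    ∫ ξ in (Icc (-R) R)ᶜ, ((1 + ξ ^ 2) ^ s)⁻¹ ≤ 2 / (2 * s - 1) * R ^ (1 - 2 * s) := by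
  have hRpos : (0:ℝ) < R := by linarith
  have hglob := integrable_jbracket hs
  have hscompl : (Icc (-R) R)ᶜ = Iio (-R) ∪ Ioi R := by
    ext x
    simp only [mem_compl_iff, mem_Icc, not_and_or, not_le, mem_union, mem_Iio, mem_Ioi]
  have hdisj : Disjoint (Iio (-R)) (Ioi R) := by
    rw [Set.disjoint_left]; intro x hx hx'
    simp only [mem_Iio, mem_Ioi] at hx hx'; linarith
  have htail : ∫ ξ in Ioi R, ((1 + ξ ^ 2) ^ s)⁻¹ ≤ R ^ (1 - 2 * s) / (2 * s - 1) := by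
    have hmono : ∫ ξ in Ioi R, ((1 + ξ ^ 2) ^ s)⁻¹ ≤ ∫ ξ in Ioi R, ξ ^ (-(2 * s)) := by
      apply setIntegral_mono_on hglob.integrableOn
        (integrableOn_Ioi_rpow_of_lt (by linarith) hRpos) measurableSet_Ioi
      intro x hx
      simp only [mem_Ioi] at hx
      have hx0 : (0:ℝ) < x := hRpos.trans hx
      rw [Real.rpow_neg hx0.le]
      apply inv_anti₀
      · positivity
      · calc x ^ (2 * s) = (x ^ 2) ^ s := by
              rw [← Real.rpow_natCast x 2, ← Real.rpow_mul hx0.le]; ring_nf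
          _ ≤ (1 + x ^ 2) ^ s := by
              apply Real.rpow_le_rpow (by positivity) (by linarith) (by linarith)
    rw [integral_Ioi_rpow_of_lt (by linarith) hRpos] at hmono
    calc ∫ ξ in Ioi R, ((1 + ξ ^ 2) ^ s)⁻¹ ≤ -R ^ (-(2 * s) + 1) / (-(2 * s) + 1) := hmono
      _ = R ^ (1 - 2 * s) / (2 * s - 1) := by
          have hne : 2 * s - 1 ≠ 0 := by intro h; rw [sub_eq_zero] at h; linarith
          have hne' : 1 - 2 * s ≠ 0 := by intro h; rw [sub_eq_zero] at h; linarith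
          rw [show -(2 * s) + 1 = 1 - 2 * s by ring, div_eq_div_iff hne' hne]
          ring
  have hneg : ∫ ξ in Iio (-R), ((1 + ξ ^ 2) ^ s)⁻¹ ≤ R ^ (1 - 2 * s) / (2 * s - 1) := by
    have h1 : ∫ ξ in Iio (-R), ((1 + ξ ^ 2) ^ s)⁻¹
        = ∫ ξ in Ioi R, ((1 + ξ ^ 2) ^ s)⁻¹ := by
      rw [← MeasureTheory.integral_Iic_eq_integral_Iio, ← integral_comp_neg_Ioi]
      simp [neg_sq]
    rw [h1]; exact htail
  rw [hscompl, setIntegral_union hdisj measurableSet_Ioi hglob.integrableOn hglob.integrableOn]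
  have : 2 / (2 * s - 1) * R ^ (1 - 2 * s)
      = R ^ (1 - 2 * s) / (2 * s - 1) + R ^ (1 - 2 * s) / (2 * s - 1) := by ring
  linarith


/-- Logarithmic Brezis–Gallouët type inequality (Lemma A.3(v)): for `s > 1/2`, there is
`C > 0` such that for every `f ∈ H^s(ℝ)` (described via its Fourier transform `g`, i.e.
`f = 𝓕⁻¹ g` with `∫ (1+ξ²)^s |g(ξ)|² dξ < ∞`),
`‖f‖_{L^∞} ≤ C ‖f‖_{H^{1/2}} (ln(2 + ‖f‖_{H^s}/‖f‖_{H^{1/2}}))^{1/2}`. -/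
theorem log_brezis_gallouet (s : ℝ) (hs : 1 / 2 < s) :
    ∃ C > 0, ∀ g : ℝ → ℂ,
      AEStronglyMeasurable g volume →
      Integrable (fun ξ : ℝ => (1 + ξ ^ 2) ^ s * ‖g ξ‖ ^ 2) →
      ∀ x : ℝ,
        ‖FourierTransformInv.fourierInv g x‖ ≤
          C * (∫ ξ : ℝ, (1 + ξ ^ 2) ^ ((1 : ℝ) / 2) * ‖g ξ‖ ^ 2) ^ ((1 : ℝ) / 2) *
            Real.sqrt (Real.log (2 +
              (∫ ξ : ℝ, (1 + ξ ^ 2) ^ s * ‖g ξ‖ ^ 2) ^ ((1 : ℝ) / 2) /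
                (∫ ξ : ℝ, (1 + ξ ^ 2) ^ ((1 : ℝ) / 2) * ‖g ξ‖ ^ 2) ^ ((1 : ℝ) / 2))) := by
  have hs1 : (0:ℝ) < 2 * s - 1 := by linarith
  set α : ℝ := 1 / (s - 1/2) with hα
  have hαpos : 0 < α := by rw [hα]; exact div_pos one_pos (by linarith)
  set m : ℝ := max α 1 with hm
  have hm1 : (1:ℝ) ≤ m := le_max_right _ _
  have hmα : α ≤ m := le_max_left _ _
  set C : ℝ := 2 * Real.sqrt (m + 1) + Real.sqrt (2 / (2*s-1)) with hC
  have hCpos : 0 < C := by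
    have h1 : 0 < Real.sqrt (m+1) := Real.sqrt_pos.mpr (by linarith)
    have h2 : 0 ≤ Real.sqrt (2/(2*s-1)) := Real.sqrt_nonneg _
    rw [hC]; linarith
  refine ⟨C, hCpos, ?_⟩
  intro g hg hB x
  have hw : ∀ ξ : ℝ, (0:ℝ) < 1 + ξ ^ 2 := fun ξ => by positivity
  have hw1 : ∀ ξ : ℝ, (1:ℝ) ≤ 1 + ξ ^ 2 := fun ξ => by nlinarith [sq_nonneg ξ]
  have hgn2 : AEStronglyMeasurable (fun ξ => ‖g ξ‖ ^ 2) volume := by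
    refine (hg.norm.mul hg.norm).congr (Filter.Eventually.of_forall fun ξ => ?_)
    simp only [Pi.mul_apply, pow_two]
  have hcont12 : Continuous fun ξ : ℝ => (1 + ξ ^ 2) ^ ((1:ℝ)/2) := by
    apply Continuous.rpow_const (by fun_prop)
    intro x; left; exact (hw x).ne'
  have hmeasA : AEStronglyMeasurable
      (fun ξ : ℝ => (1 + ξ ^ 2) ^ ((1:ℝ)/2) * ‖g ξ‖ ^ 2) volume :=
    hcont12.aestronglyMeasurable.mul hgn2
  have hptAB : ∀ ξ : ℝ, (1 + ξ ^ 2) ^ ((1:ℝ)/2) * ‖g ξ‖ ^ 2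
      ≤ (1 + ξ ^ 2) ^ s * ‖g ξ‖ ^ 2 := fun ξ =>
    mul_le_mul_of_nonneg_right
      (Real.rpow_le_rpow_of_exponent_le (hw1 ξ) hs.le) (by positivity)
  have hintA : Integrable (fun ξ : ℝ => (1 + ξ ^ 2) ^ ((1:ℝ)/2) * ‖g ξ‖ ^ 2) := by
    refine hB.mono' hmeasA (Filter.Eventually.of_forall fun ξ => ?_)
    rw [Real.norm_eq_abs, abs_of_nonneg (by positivity)]
    exact hptAB ξ
  set A := ∫ ξ : ℝ, (1 + ξ ^ 2) ^ ((1:ℝ)/2) * ‖g ξ‖ ^ 2 with hAdef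
  set B := ∫ ξ : ℝ, (1 + ξ ^ 2) ^ s * ‖g ξ‖ ^ 2 with hBdef
  have hA0 : 0 ≤ A := integral_nonneg fun ξ => by positivity
  have hAB : A ≤ B := integral_mono hintA hB hptAB
  have hLHS : ‖FourierTransformInv.fourierInv g x‖ ≤ ∫ ξ : ℝ, ‖g ξ‖ :=
    VectorFourier.norm_fourierIntegral_le_integral_norm _ _ _ _ _
  rcases eq_or_lt_of_le hA0 with hA0' | hApos
  · -- degenerate case A = 0
    have hzero : ∀ᵐ ξ : ℝ, (1 + ξ ^ 2) ^ ((1:ℝ)/2) * ‖g ξ‖ ^ 2 = 0 := by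
      have h := (integral_eq_zero_iff_of_nonneg (fun ξ => by positivity) hintA).mp hA0'.symm
      exact h
    have hgz : ∫ ξ : ℝ, ‖g ξ‖ = 0 := by
      rw [show (0:ℝ) = ∫ _ : ℝ, (0:ℝ) from (integral_zero _ _).symm]
      apply integral_congr_ae
      filter_upwards [hzero] with ξ hξ
      have hpos : (0:ℝ) < (1 + ξ ^ 2) ^ ((1:ℝ)/2) := Real.rpow_pos_of_pos (hw ξ) _
      have : ‖g ξ‖ ^ 2 = 0 := by
        by_contra hne
        exact hne (by nlinarith [sq_nonneg ‖g ξ‖, norm_nonneg (g ξ)])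
      simpa using pow_eq_zero_iff (n := 2) (by norm_num) |>.mp this
    rw [← hA0', Real.zero_rpow (by norm_num)]
    simp only [mul_zero, zero_mul]
    linarith
  · -- main case A > 0
    have hBpos : 0 < B := lt_of_lt_of_le hApos hAB
    set sA := Real.sqrt A with hsAdef
    set sB := Real.sqrt B with hsBdef
    have hsApos : 0 < sA := Real.sqrt_pos.mpr hApos
    have hsBpos : 0 < sB := Real.sqrt_pos.mpr hBpos
    have hsA2 : sA ^ 2 = A := Real.sq_sqrt hA0
    have hsB2 : sB ^ 2 = B := Real.sq_sqrt hBpos.le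
    set t := sB / sA with ht
    have ht1 : 1 ≤ t := (one_le_div hsApos).mpr (Real.sqrt_le_sqrt hAB)
    have htpos : 0 < t := by linarith
    set R := t ^ α with hRdef
    have hR1 : 1 ≤ R := Real.one_le_rpow ht1 hαpos.le
    have hRpos : (0:ℝ) < R := by linarith
    -- global integrability of ‖g‖
    have hjb := integrable_jbracket hs
    have hIw : 0 ≤ ∫ ξ : ℝ, ((1 + ξ ^ 2) ^ s)⁻¹ := integral_nonneg fun ξ => by positivity
    have hgint : Integrable (fun ξ : ℝ => ‖g ξ‖) :=
      (amgm_integral (fun ξ => Real.rpow_pos_of_pos (hw ξ) s) hg hjb hB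
        (I := (∫ ξ : ℝ, ((1 + ξ ^ 2) ^ s)⁻¹) + 1) (J := B + 1)
        (by linarith) (by linarith) (by linarith) (by linarith)).1
    -- splitting
    have hsplit : ∫ ξ : ℝ, ‖g ξ‖
        = (∫ ξ in Icc (-R) R, ‖g ξ‖) + ∫ ξ in (Icc (-R) R)ᶜ, ‖g ξ‖ :=
      (integral_add_compl measurableSet_Icc hgint).symm
    -- low frequencies
    have hlogRpos : 0 < Real.log (2 + R) := Real.log_pos (by linarith)
    have hlow : ∫ ξ in Icc (-R) R, ‖g ξ‖
        ≤ Real.sqrt (4 * Real.log (2 + R)) * sA := by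
      refine (amgm_integral (μ := volume.restrict (Icc (-R) R))
        (w := fun ξ => (1 + ξ ^ 2) ^ ((1:ℝ)/2))
        (fun ξ => Real.rpow_pos_of_pos (hw ξ) _) hg.restrict
        ?_ hintA.integrableOn (I := 4 * Real.log (2 + R)) (J := A)
        (by linarith) hApos (weight_low hR1) ?_).2
      · exact (hcont12.inv₀ fun x => (Real.rpow_pos_of_pos (hw x) _).ne').integrableOn_Icc
      · exact setIntegral_le_integral hintA
          (Filter.Eventually.of_forall fun ξ => by positivity)
    -- high frequencies
    have hRpow : (0:ℝ) < 2 / (2*s-1) * R ^ (1 - 2*s) :=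
      mul_pos (div_pos two_pos hs1) (Real.rpow_pos_of_pos hRpos _)
    have hhigh : ∫ ξ in (Icc (-R) R)ᶜ, ‖g ξ‖
        ≤ Real.sqrt (2 / (2*s-1) * R ^ (1 - 2*s)) * sB := by
      refine (amgm_integral (μ := volume.restrict (Icc (-R) R)ᶜ)
        (w := fun ξ => (1 + ξ ^ 2) ^ s)
        (fun ξ => Real.rpow_pos_of_pos (hw ξ) _) hg.restrict
        hjb.integrableOn hB.integrableOn
        (I := 2 / (2*s-1) * R ^ (1 - 2*s)) (J := B)
        hRpow hBpos (weight_high hs hR1) ?_).2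
      exact setIntegral_le_integral hB
        (Filter.Eventually.of_forall fun ξ => by positivity)
    -- simplify the high-frequency bound
    clear_value α m A B sA sB t R
    have hsne : s - 1/2 ≠ 0 := ne_of_gt (by linarith)
    have hRpow2 : R ^ (1 - 2*s) = A / B := by
      have he : α * (1 - 2*s) = -2 := by
        rw [hα, div_mul_eq_mul_div, one_mul, div_eq_iff hsne]; ring
      have h1 : R ^ (1 - 2*s) = t ^ (-2 : ℝ) := by
        rw [hRdef, ← Real.rpow_mul htpos.le, he]
      rw [h1, show (-2:ℝ) = -((2:ℕ):ℝ) by norm_num, Real.rpow_neg htpos.le,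
        Real.rpow_natCast, ht, div_pow, hsA2, hsB2, inv_div]
    have hhigh' : ∫ ξ in (Icc (-R) R)ᶜ, ‖g ξ‖ ≤ Real.sqrt (2 / (2*s-1)) * sA := by
      have heq : Real.sqrt (2 / (2*s-1) * R ^ (1 - 2*s)) * sB
          = Real.sqrt (2 / (2*s-1)) * sA := by
        rw [hRpow2, Real.sqrt_mul (div_nonneg (by norm_num) hs1.le), Real.sqrt_div hA0,
          ← hsAdef, ← hsBdef]
        field_simp
      rw [← heq]; exact hhigh
    -- logarithm comparison
    have hlogR : Real.log (2 + R) ≤ (m + 1) * Real.log (2 + t) := by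
      have harg : 2 + R ≤ (2 + t) ^ (m + 1) := by
        have h1 : R ≤ (2 + t) ^ m := by
          rw [hRdef]
          calc t ^ α ≤ t ^ m := Real.rpow_le_rpow_of_exponent_le ht1 hmα
            _ ≤ (2 + t) ^ m := Real.rpow_le_rpow htpos.le (by linarith) (by linarith)
        have h2 : (1:ℝ) ≤ (2 + t) ^ m := Real.one_le_rpow (by linarith) (by linarith)
        have h3 : (2 + t) ^ (m + 1) = (2 + t) ^ m * (2 + t) := by
          rw [Real.rpow_add (by linarith), Real.rpow_one]
        rw [h3]
        have h4 : 3 * ((2 + t) ^ m) ≤ ((2 + t) ^ m) * (2 + t) := by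
          rw [mul_comm (3:ℝ)]
          exact mul_le_mul_of_nonneg_left (by linarith) (by linarith)
        linarith
      calc Real.log (2 + R) ≤ Real.log ((2 + t) ^ (m + 1)) :=
            Real.log_le_log (by linarith) harg
        _ = (m + 1) * Real.log (2 + t) := Real.log_rpow (by linarith) _
    have hlogt : 1 ≤ Real.log (2 + t) := by
      rw [Real.le_log_iff_exp_le (by linarith)]
      calc Real.exp 1 ≤ 2.7182818286 := Real.exp_one_lt_d9.le
        _ ≤ 2 + t := by norm_num; linarith
    have hsqlog1 : 1 ≤ Real.sqrt (Real.log (2 + t)) := by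
      have := Real.sqrt_le_sqrt hlogt
      rwa [Real.sqrt_one] at this
    have hlow2 : Real.sqrt (4 * Real.log (2 + R))
        ≤ 2 * Real.sqrt (m + 1) * Real.sqrt (Real.log (2 + t)) := by
      calc Real.sqrt (4 * Real.log (2 + R))
          ≤ Real.sqrt (4 * ((m + 1) * Real.log (2 + t))) :=
            Real.sqrt_le_sqrt (by nlinarith)
        _ = 2 * Real.sqrt (m + 1) * Real.sqrt (Real.log (2 + t)) := by
            rw [show (4:ℝ) * ((m + 1) * Real.log (2 + t))
                = (2:ℝ)^2 * ((m + 1) * Real.log (2 + t)) by ring,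
              Real.sqrt_mul (by positivity), Real.sqrt_sq (by norm_num),
              Real.sqrt_mul (by linarith)]
            ring
    -- final assembly
    have hfinal : ‖FourierTransformInv.fourierInv g x‖
        ≤ C * sA * Real.sqrt (Real.log (2 + t)) := by
      have e1 : ∫ ξ in Icc (-R) R, ‖g ξ‖
          ≤ 2 * Real.sqrt (m + 1) * Real.sqrt (Real.log (2 + t)) * sA :=
        hlow.trans (mul_le_mul_of_nonneg_right hlow2 hsApos.le)
      have e3 : Real.sqrt (2 / (2*s-1)) * sA
          ≤ Real.sqrt (2 / (2*s-1)) * sA * Real.sqrt (Real.log (2 + t)) := by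
        nlinarith [mul_nonneg (Real.sqrt_nonneg (2 / (2*s-1))) hsApos.le]
      calc ‖FourierTransformInv.fourierInv g x‖ ≤ ∫ ξ : ℝ, ‖g ξ‖ := hLHS
        _ = (∫ ξ in Icc (-R) R, ‖g ξ‖) + ∫ ξ in (Icc (-R) R)ᶜ, ‖g ξ‖ := hsplit
        _ ≤ 2 * Real.sqrt (m + 1) * Real.sqrt (Real.log (2 + t)) * sA
            + Real.sqrt (2 / (2*s-1)) * sA * Real.sqrt (Real.log (2 + t)) := by
            linarith
        _ = C * sA * Real.sqrt (Real.log (2 + t)) := by rw [hC]; ring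
    have hA12 : A ^ ((1:ℝ)/2) = sA := by rw [hsAdef, Real.sqrt_eq_rpow]
    have hB12 : B ^ ((1:ℝ)/2) = sB := by rw [hsBdef, Real.sqrt_eq_rpow]
    rw [hA12, hB12, ← ht]
    exact hfinal
end

section
/- Let ω > 0, 0 < δ < 1/2, t₀ < 0, and let γ : [t₀, 0) → ℝ and λ : [t₀, 0) → (0,∞) be C¹ with |λ(t) γ'(t) − 1| ≤ C|t|^{4−δ}/λ(t), C t² ≤ λ(t) ≤ t²/C, and |λ(t) − (ω²/4)t²| ≤ C |t|^{4−δ}. Suppose γ(T) = −4/(ω² T) + θ for some T ∈ (t₀, 0) and θ ∈ ℝ. Then for all t ∈ [t₀, T], |γ(t) + 4/(ω² t) − θ| ≤ C' |t|^{1−δ} for some C' depending only on C, δ, ω. -/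
open Set

/-- Phase-parameter bootstrap estimate (step (iv) of the proof of Theorem 3.1): if
`|λ γ' - 1| ≤ C |t|^{4-δ}/λ`, `C t² ≤ λ ≤ t²/C`, `|λ - (ω²/4)t²| ≤ C |t|^{4-δ}` on
`[t₀, 0)` and `γ(T) = -4/(ω² T) + θ` at some `T ∈ (t₀, 0)`, then
`|γ(t) + 4/(ω² t) - θ| ≤ C' |t|^{1-δ}` on `[t₀, T]`. -/
theorem bootstrap_phase_estimate
    (ω δ C : ℝ) (hω : 0 < ω) (hδ : 0 < δ) (hδ' : δ < 1 / 2) (hC : 0 < C) :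
    ∃ C' > 0, ∀ (t₀ T θ : ℝ) (γ lam : ℝ → ℝ), t₀ < 0 → T ∈ Ioo t₀ (0 : ℝ) →
      (∀ t ∈ Ico t₀ (0 : ℝ), DifferentiableAt ℝ γ t) →
      (∀ t ∈ Ico t₀ (0 : ℝ), 0 < lam t) →
      (∀ t ∈ Ico t₀ (0 : ℝ),
        |lam t * deriv γ t - 1| ≤ C * |t| ^ ((4 : ℝ) - δ) / lam t) →
      (∀ t ∈ Ico t₀ (0 : ℝ), C * t ^ 2 ≤ lam t ∧ lam t ≤ t ^ 2 / C) →
      (∀ t ∈ Ico t₀ (0 : ℝ),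
        |lam t - ω ^ 2 / 4 * t ^ 2| ≤ C * |t| ^ ((4 : ℝ) - δ)) →
      γ T = -4 / (ω ^ 2 * T) + θ →
      ∀ t ∈ Icc t₀ T,
        |γ t + 4 / (ω ^ 2 * t) - θ| ≤ C' * |t| ^ ((1 : ℝ) - δ) := by
  have h1δ : (0:ℝ) < 1 - δ := by linarith
  set K : ℝ := 1 / C + 4 / ω ^ 2 with hKdef
  have hKpos : 0 < K := by positivity
  refine ⟨K / (1 - δ), by positivity, ?_⟩
  intro t₀ T θ γ lam ht₀ hT hγd hlamp hγ' hlb hlc hγT t ht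
  have hT0 : T < 0 := hT.2
  have ht0T : t₀ < T := hT.1
  have hsub : Icc t₀ T ⊆ Ico t₀ (0:ℝ) := fun s hs => ⟨hs.1, lt_of_le_of_lt hs.2 hT0⟩
  set F : ℝ → ℝ := fun s => γ s + 4 / (ω ^ 2 * s) - θ with hFdef
  set g : ℝ → ℝ := fun s => K / (1 - δ) * (-s) ^ ((1:ℝ) - δ) with hgdef
  -- F has derivative deriv γ s - 4/(ω²s²) at each s ∈ Ico t₀ 0
  have hFd : ∀ s ∈ Ico t₀ (0:ℝ),
      HasDerivAt F (deriv γ s - 4 / (ω ^ 2 * s ^ 2)) s := by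
    intro s hs
    have hs0 : s ≠ 0 := ne_of_lt hs.2
    have h1 : HasDerivAt γ (deriv γ s) s := (hγd s hs).hasDerivAt
    have h2 : HasDerivAt (fun x : ℝ => 4 / (ω ^ 2 * x)) (-(4 / (ω ^ 2 * s ^ 2))) s := by
      have h := (hasDerivAt_inv hs0).const_mul (4 / ω ^ 2)
      have hf : (fun x : ℝ => 4 / (ω ^ 2 * x)) = fun y => 4 / ω ^ 2 * y⁻¹ := by
        funext x; ring
      rw [hf]
      exact h.congr_deriv (by ring)
    have := (h1.add h2).sub_const θ
    exact this.congr_deriv (by ring)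
  -- derivative bound
  have hFb : ∀ s ∈ Ico t₀ (0:ℝ),
      |deriv γ s - 4 / (ω ^ 2 * s ^ 2)| ≤ K * (-s) ^ (-δ) := by
    intro s hs
    have hs0 : s < 0 := hs.2
    have hsne : s ≠ 0 := ne_of_lt hs0
    have hL : 0 < lam s := hlamp s hs
    have hL1 : C * s ^ 2 ≤ lam s := (hlb s hs).1
    have hs2 : (0:ℝ) < s ^ 2 := by positivity
    have hA : |s| ^ ((4:ℝ) - δ) = s ^ 4 * (-s) ^ (-δ) := by
      rw [abs_of_neg hs0]
      have h4 : (4:ℝ) - δ = (4:ℝ) + (-δ) := by ring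
      rw [h4, Real.rpow_add (by linarith : (0:ℝ) < -s)]
      have : (-s) ^ ((4:ℝ)) = (-s) ^ (4:ℕ) := by
        rw [← Real.rpow_natCast (-s) 4]; norm_num
      rw [this]
      ring
    have key : deriv γ s - 4 / (ω ^ 2 * s ^ 2)
        = (lam s * deriv γ s - 1) / lam s
          + (-4) * (lam s - ω ^ 2 / 4 * s ^ 2) / (ω ^ 2 * s ^ 2 * lam s) := by
      field_simp
      ring
    rw [key]
    have habs : |(lam s * deriv γ s - 1) / lam s
          + (-4) * (lam s - ω ^ 2 / 4 * s ^ 2) / (ω ^ 2 * s ^ 2 * lam s)|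
        ≤ |lam s * deriv γ s - 1| / lam s
          + 4 * |lam s - ω ^ 2 / 4 * s ^ 2| / (ω ^ 2 * s ^ 2 * lam s) := by
      refine (abs_add_le _ _).trans_eq ?_
      rw [abs_div, abs_div, abs_mul, abs_of_pos hL,
        abs_of_pos (by positivity : (0:ℝ) < ω ^ 2 * s ^ 2 * lam s)]
      norm_num
    refine habs.trans ?_
    have h1 : |lam s * deriv γ s - 1| / lam s
        ≤ (C * |s| ^ ((4:ℝ) - δ) / (C * s ^ 2)) / (C * s ^ 2) := by
      calc |lam s * deriv γ s - 1| / lam s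
          ≤ (C * |s| ^ ((4:ℝ) - δ) / lam s) / lam s := by
            gcongr
            exact hγ' s hs
        _ ≤ (C * |s| ^ ((4:ℝ) - δ) / (C * s ^ 2)) / (C * s ^ 2) := by
            gcongr <;> positivity
    have h2 : 4 * |lam s - ω ^ 2 / 4 * s ^ 2| / (ω ^ 2 * s ^ 2 * lam s)
        ≤ 4 * (C * |s| ^ ((4:ℝ) - δ)) / (ω ^ 2 * s ^ 2 * (C * s ^ 2)) := by
      gcongr <;> first | positivity | exact hlc s hs | exact (hlb s hs).1
    refine (add_le_add h1 h2).trans_eq ?_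
    rw [hA, hKdef]
    field_simp
  -- derivative of g
  have hgd : ∀ s ∈ Ico t₀ (0:ℝ), HasDerivAt g (-(K * (-s) ^ (-δ))) s := by
    intro s hs
    have hs0 : s < 0 := hs.2
    have h1 : HasDerivAt (fun x : ℝ => -x) (-1) s := (hasDerivAt_id s).neg
    have h2 := h1.rpow_const (p := (1:ℝ) - δ) (Or.inl (by simp; linarith))
    have h3 := h2.const_mul (K / (1 - δ))
    refine h3.congr_deriv ?_
    have he : (1:ℝ) - δ - 1 = -δ := by ring
    rw [he]
    field_simp
  -- F T = 0
  have hFT : F T = 0 := by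
    simp only [hFdef]
    rw [hγT]
    ring
  have hgT : 0 ≤ g T := by
    have : (0:ℝ) ≤ (-T) ^ ((1:ℝ) - δ) := Real.rpow_nonneg (by linarith) _
    positivity
  have hconv : Convex ℝ (Icc t₀ T) := convex_Icc _ _
  have hint : interior (Icc t₀ T) = Ioo t₀ T := interior_Icc
  have hintsub : Ioo t₀ T ⊆ Ico t₀ (0:ℝ) := fun s hs => ⟨le_of_lt hs.1, lt_trans hs.2 hT0⟩
  -- u = -g - F is monotone
  have hud : ∀ s ∈ Ico t₀ (0:ℝ),
      HasDerivAt (fun x => -g x - F x)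
        (K * (-s) ^ (-δ) - (deriv γ s - 4 / (ω ^ 2 * s ^ 2))) s := by
    intro s hs
    have := ((hgd s hs).neg).sub (hFd s hs)
    exact this.congr_deriv (by ring)
  have hvd : ∀ s ∈ Ico t₀ (0:ℝ),
      HasDerivAt (fun x => F x - g x)
        ((deriv γ s - 4 / (ω ^ 2 * s ^ 2)) - (-(K * (-s) ^ (-δ)))) s :=
    fun s hs => (hFd s hs).sub (hgd s hs)
  have humono : MonotoneOn (fun x => -g x - F x) (Icc t₀ T) := by
    apply monotoneOn_of_deriv_nonneg hconv
    · intro s hs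
      exact ((hud s (hsub hs)).differentiableAt.continuousAt).continuousWithinAt
    · rw [hint]
      intro s hs
      exact ((hud s (hintsub hs)).differentiableAt).differentiableWithinAt
    · rw [hint]
      intro s hs
      rw [(hud s (hintsub hs)).deriv]
      have := (abs_le.mp (hFb s (hintsub hs))).2
      linarith
  have hvmono : MonotoneOn (fun x => F x - g x) (Icc t₀ T) := by
    apply monotoneOn_of_deriv_nonneg hconv
    · intro s hs
      exact ((hvd s (hsub hs)).differentiableAt.continuousAt).continuousWithinAt
    · rw [hint]
      intro s hs
      exact ((hvd s (hintsub hs)).differentiableAt).differentiableWithinAt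
    · rw [hint]
      intro s hs
      rw [(hvd s (hintsub hs)).deriv]
      have := (abs_le.mp (hFb s (hintsub hs))).1
      linarith
  have hTmem : T ∈ Icc t₀ T := ⟨le_of_lt ht0T, le_refl T⟩
  have hu := humono ht hTmem ht.2
  have hv := hvmono ht hTmem ht.2
  simp only [hFT] at hu hv
  -- conclude
  have ht0 : t < 0 := lt_of_le_of_lt ht.2 hT0
  have hFt : |F t| ≤ g t := by
    rw [abs_le]
    constructor <;> [nlinarith; nlinarith]
  have : g t = K / (1 - δ) * |t| ^ ((1:ℝ) - δ) := by
    rw [hgdef, abs_of_neg ht0]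
  rw [← this]
  exact hFt
end
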